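/- Let S = {x ∈ ℝ^n : h_i^T x ≤ b_i, i = 1,…,r} and U_0 = {A ∈ ℝ^{n×n} : Tr(V_j^T A) ≤ v_j, j = 1,…,s} be polyhedra, and let A_⋆ ∈ U_0. For a finite sequence z_1,…,z_k ∈ ℝ^n define U(z_1,…,z_k) = {A ∈ U_0 : A z_j = A_⋆ z_j, j = 1,…,k} and S¹(z_1,…,z_k) = {x ∈ S : A x ∈ S for all A ∈ U(z_1,…,z_k)}. If there exist a nonnegative integer m and vectors x_1,…,x_m ∈ ℝ^n such that x_k ∈ S¹(x_1,…,x_{k−1}) for every k = 1,…,m and U(x_1,…,x_m) = {A_⋆}, then there exist m' ≤ n and vectors x'_1,…,x'_{m'} ∈ ℝ^n such that x'_k ∈ S¹(x'_1,…,x'_{k−1}) for every k = 1,…,m' and U(x'_1,…,x'_{m'}) = {A_⋆}. -/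

import Mathlib

open Matrix

/-- If one-step safe learning of `A⋆` is possible with some number of measurements,
then it is possible with at most `n` measurements. -/
theorem stmt_2 (n r s : ℕ)
    (h : Fin r → Fin n → ℝ) (b : Fin r → ℝ)
    (V : Fin s → Matrix (Fin n) (Fin n) ℝ) (v : Fin s → ℝ)
    (S : Set (Fin n → ℝ)) (hS : S = {z | ∀ i, h i ⬝ᵥ z ≤ b i})
    (U0 : Set (Matrix (Fin n) (Fin n) ℝ))
    (hU0 : U0 = {A | ∀ j, ((V j)ᵀ * A).trace ≤ v j})
    (Astar : Matrix (Fin n) (Fin n) ℝ) (hAstar : Astar ∈ U0)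
    (m : ℕ) (x : ℕ → Fin n → ℝ)
    (hsafe : ∀ k < m, x k ∈ S ∧ ∀ A ∈ U0,
        (∀ j < k, A *ᵥ x j = Astar *ᵥ x j) → A *ᵥ x k ∈ S)
    (hlearn : {A ∈ U0 | ∀ j < m, A *ᵥ x j = Astar *ᵥ x j} = {Astar}) :
    ∃ (m' : ℕ) (x' : ℕ → Fin n → ℝ), m' ≤ n ∧
      (∀ k < m', x' k ∈ S ∧ ∀ A ∈ U0,
        (∀ j < k, A *ᵥ x' j = Astar *ᵥ x' j) → A *ᵥ x' k ∈ S) ∧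
      {A ∈ U0 | ∀ j < m', A *ᵥ x' j = Astar *ᵥ x' j} = {Astar} := by
  classical
  -- indices whose vector is not in the span of all earlier vectors
  set P : ℕ → Prop := fun k => x k ∉ Submodule.span ℝ (x '' {j | j < k}) with hPdef
  set K : Finset ℕ := (Finset.range m).filter P with hKdef
  have hKmem : ∀ i, i ∈ K ↔ i < m ∧ P i := by
    intro i; simp [hKdef, Finset.mem_filter, Finset.mem_range]
  -- every earlier vector lies in the span of the kept earlier vectors
  have spanle : ∀ j, ∀ t, j < t → t ≤ m →
      x j ∈ Submodule.span ℝ (x '' {i | i ∈ K ∧ i < t}) := by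
    intro j
    induction j using Nat.strong_induction_on with
    | _ j IH =>
      intro t hjt htm
      by_cases hPj : P j
      · exact Submodule.subset_span ⟨j, ⟨(hKmem j).2 ⟨lt_of_lt_of_le hjt htm, hPj⟩, hjt⟩, rfl⟩
      · have hj : x j ∈ Submodule.span ℝ (x '' {i | i < j}) := not_not.mp hPj
        refine Submodule.span_le.mpr ?_ hj
        rintro _ ⟨i, hi, rfl⟩
        exact IH i hi t (hi.trans hjt) htm
  -- agreeing on kept earlier vectors forces agreement on all earlier vectors
  have key : ∀ (A : Matrix (Fin n) (Fin n) ℝ) (t : ℕ), t ≤ m →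
      (∀ i ∈ K, i < t → A *ᵥ x i = Astar *ᵥ x i) → ∀ j < t, A *ᵥ x j = Astar *ᵥ x j := by
    intro A t htm hA j hjt
    have hx := spanle j t hjt htm
    have hsub : x '' {i | i ∈ K ∧ i < t} ⊆
        (LinearMap.ker ((A - Astar).mulVecLin) : Submodule ℝ (Fin n → ℝ)) := by
      rintro _ ⟨i, ⟨hiK, hit⟩, rfl⟩
      simp [LinearMap.mem_ker, Matrix.mulVecLin_apply, Matrix.sub_mulVec, sub_eq_zero,
        hA i hiK hit]
    have hk := Submodule.span_le.mpr hsub hx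
    simpa [LinearMap.mem_ker, Matrix.mulVecLin_apply, Matrix.sub_mulVec, sub_eq_zero] using hk
  -- counting: the number of kept indices below `t` is at most the rank of the span
  have dle : ∀ t, ((Finset.range t).filter P).card ≤
      Module.finrank ℝ (Submodule.span ℝ (x '' {j | j < t})) := by
    intro t
    induction t with
    | zero => simp
    | succ t IH =>
      have hmono : Submodule.span ℝ (x '' {j | j < t}) ≤
          Submodule.span ℝ (x '' {j | j < t + 1}) :=
        Submodule.span_mono (Set.image_mono fun i hi => lt_trans hi (Nat.lt_succ_self t))
      rw [Finset.range_add_one, Finset.filter_insert]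
      by_cases hPt : P t
      · rw [if_pos hPt, Finset.card_insert_of_notMem (by simp)]
        have hlt : Submodule.span ℝ (x '' {j | j < t}) <
            Submodule.span ℝ (x '' {j | j < t + 1}) := by
          refine lt_of_le_of_ne hmono fun heq => hPt ?_
          rw [heq]
          exact Submodule.subset_span ⟨t, Nat.lt_succ_self t, rfl⟩
        have := Submodule.finrank_lt_finrank_of_lt hlt
        omega
      · rw [if_neg hPt]
        exact IH.trans (Submodule.finrank_mono hmono)
  have hKcard : K.card ≤ n := by
    have h1 := dle m
    have h2 : Module.finrank ℝ (Submodule.span ℝ (x '' {j | j < m})) ≤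
        Module.finrank ℝ (Fin n → ℝ) := Submodule.finrank_le _
    rw [Module.finrank_fin_fun ℝ] at h2
    exact le_trans (le_trans (le_of_eq rfl) h1) (le_trans h2 (le_refl n))
  -- sort the kept indices
  set l : List ℕ := K.sort (· ≤ ·) with hldef
  have hlen : l.length = K.card := Finset.length_sort _
  have hlsorted : l.SortedLT := Finset.sortedLT_sort K
  have hlmem : ∀ i, i ∈ l ↔ i ∈ K := fun i => Finset.mem_sort _
  set x' : ℕ → Fin n → ℝ := fun k => x (l.getD k 0) with hx'def
  refine ⟨l.length, x', hlen ▸ hKcard, ?_, ?_⟩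
  · -- safety of the subsequence
    intro k hk
    have hgetD : l.getD k 0 = l.get ⟨k, hk⟩ := List.getD_eq_getElem l 0 hk
    set i : ℕ := l.get ⟨k, hk⟩ with hidef
    have hiK : i ∈ K := (hlmem i).mp (l.get_mem _)
    obtain ⟨him, -⟩ := (hKmem i).mp hiK
    have hx'k : x' k = x i := by rw [hx'def]; simp only [hgetD]
    obtain ⟨hxS, hxsafe⟩ := hsafe i him
    refine ⟨by rw [hx'k]; exact hxS, ?_⟩
    intro A hAU0 hAagree
    rw [hx'k]
    refine hxsafe A hAU0 (key A i (le_of_lt him) ?_)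
    -- agreement on kept indices below i
    intro i' hi'K hi'lt
    obtain ⟨⟨j', hj'⟩, rfl⟩ := List.get_of_mem ((hlmem i').mpr hi'K)
    have hj'k : j' < k := by
      by_contra hge
      push_neg at hge
      rcases eq_or_lt_of_le hge with heq | hlt
      · have hfe : (⟨j', hj'⟩ : Fin l.length) = ⟨k, hk⟩ := Fin.ext heq.symm
        exact absurd (congrArg l.get hfe) (ne_of_lt hi'lt)
      · have hfin : (⟨k, hk⟩ : Fin l.length) < ⟨j', hj'⟩ := Fin.mk_lt_mk.mpr hlt
        exact absurd (hlsorted hfin) (not_lt.mpr (le_of_lt hi'lt))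
    have := hAagree j' hj'k
    simp only [hx'def] at this
    rw [List.get_eq_getElem]
    rwa [List.getD_eq_getElem l 0 hj'] at this
  · -- learning with the subsequence
    ext A
    simp only [Set.mem_setOf_eq, Set.mem_singleton_iff]
    constructor
    · rintro ⟨hAU0, hAagree⟩
      have hall : ∀ j < m, A *ᵥ x j = Astar *ᵥ x j := by
        refine key A m le_rfl ?_
        intro i hiK _
        obtain ⟨⟨j', hj'⟩, rfl⟩ := List.get_of_mem ((hlmem i).mpr hiK)
        have := hAagree j' hj'
        simp only [hx'def] at this
        rw [List.get_eq_getElem]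
        rwa [List.getD_eq_getElem l 0 hj'] at this
      have : A ∈ ({A ∈ U0 | ∀ j < m, A *ᵥ x j = Astar *ᵥ x j} : Set _) := ⟨hAU0, hall⟩
      rwa [hlearn] at this
    · rintro rfl
      exact ⟨hAstar, fun j _ => rfl⟩
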